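/- arXiv:1310.6384 — 3 statements merged into one kernel-verified Lean document; each statement's English description precedes it below -/
import Mathlib

section
/- Let G be a normal subgroup of a finite group H, with quotient Q = H/Q and quotient map j, and fix a section s: Q → H of j. For q ∈ Q and an irreducible complex representation ρ of G, let q([ρ]) denote the isomorphism class of g ↦ ρ(s(q)gs(q)⁻¹), and let χ_ρ denote the character of ρ. Then for all g₁, g₂ ∈ G: ∑_{[ρ] ∈ Ĝ} ∑_{q ∈ Q} χ_ρ(g₁⁻¹) · χ_{q([ρ])}(g₂) equals |C_H(g₁)| if g₁ and g₂ are conjugate in H, and 0 otherwise. -/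
open CategoryTheory Limits Module
open scoped Classical

section Counting
variable {M : Type*} [Group M] [Fintype M]

theorem card_conj_tgt (a b : M) :
    Fintype.card {c : M // c * a * c⁻¹ = b} =
      if IsConj a b then Fintype.card (Subgroup.centralizer ({b} : Set M)) else 0 := by
  split_ifs with h
  · obtain ⟨c₀, hc₀⟩ := isConj_iff.mp h
    apply Fintype.card_congr
    refine ⟨fun c => ⟨c.1 * c₀⁻¹, ?_⟩, fun d => ⟨d.1 * c₀, ?_⟩, fun c => by ext; simp [mul_assoc],
      fun d => by ext; simp [mul_assoc]⟩
    · rw [Subgroup.mem_centralizer_singleton_iff]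
      have hc := c.2
      exact (calc b * (c.1 * c₀⁻¹) = (c.1 * a * c.1⁻¹) * (c.1 * c₀⁻¹) := by rw [hc]
        _ = c.1 * c₀⁻¹ * (c₀ * a * c₀⁻¹) := by group
        _ = c.1 * c₀⁻¹ * b := by rw [hc₀]).symm
    · have hd := Subgroup.mem_centralizer_singleton_iff.mp d.2
      calc d.1 * c₀ * a * (d.1 * c₀)⁻¹ = d.1 * (c₀ * a * c₀⁻¹) * d.1⁻¹ := by group
        _ = d.1 * b * d.1⁻¹ := by rw [hc₀]
        _ = b * d.1 * d.1⁻¹ := by rw [← hd]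
        _ = b := by group
  · rw [Fintype.card_eq_zero_iff]
    exact ⟨fun c => h (isConj_iff.mpr ⟨c.1, c.2⟩)⟩

theorem card_conj_src (a b : M) :
    Fintype.card {c : M // c * a * c⁻¹ = b} =
      if IsConj a b then Fintype.card (Subgroup.centralizer ({a} : Set M)) else 0 := by
  split_ifs with h
  · obtain ⟨c₀, hc₀⟩ := isConj_iff.mp h
    apply Fintype.card_congr
    refine ⟨fun c => ⟨c₀⁻¹ * c.1, ?_⟩, fun d => ⟨c₀ * d.1, ?_⟩, fun c => by ext; simp [mul_assoc],
      fun d => by ext; simp [mul_assoc]⟩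
    · rw [Subgroup.mem_centralizer_singleton_iff]
      have hc := c.2
      exact (calc a * (c₀⁻¹ * c.1) = c₀⁻¹ * (c₀ * a * c₀⁻¹) * c.1 := by group
        _ = c₀⁻¹ * (c.1 * a * c.1⁻¹) * c.1 := by rw [hc₀, hc]
        _ = c₀⁻¹ * c.1 * a := by group).symm
    · have hd := Subgroup.mem_centralizer_singleton_iff.mp d.2
      calc c₀ * d.1 * a * (c₀ * d.1)⁻¹ = c₀ * (d.1 * a * d.1⁻¹) * c₀⁻¹ := by group
        _ = c₀ * (a * d.1 * d.1⁻¹) * c₀⁻¹ := by rw [hd]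
        _ = c₀ * a * c₀⁻¹ := by group
        _ = b := hc₀
  · rw [Fintype.card_eq_zero_iff]
    exact ⟨fun c => h (isConj_iff.mpr ⟨c.1, c.2⟩)⟩

end Counting

noncomputable section Subrep
variable {K : Type} [Group K]

theorem fdrep_comm {V W : FDRep ℂ K} (φ : V ⟶ W) (g : K) (x : V) :
    φ.hom (V.ρ g x) = W.ρ g (φ.hom x) :=
  congrArg (fun f => (ConcreteCategory.hom f) x) (φ.comm g)

/-- Subrepresentation attached to an invariant subspace. -/
def subrep (V : FDRep ℂ K) (p : Submodule ℂ V) (hp : ∀ (g : K) x, x ∈ p → V.ρ g x ∈ p) :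
    FDRep ℂ K :=
  FDRep.of
    { toFun := fun g => (V.ρ g).restrict (fun x hx => hp g x hx)
      map_one' := by ext x; simp [LinearMap.restrict_apply]
      map_mul' := fun g h => by ext x; simp [LinearMap.restrict_apply] }

def subrepIncl (V : FDRep ℂ K) (p : Submodule ℂ V) (hp : ∀ (g : K) x, x ∈ p → V.ρ g x ∈ p) :
    subrep V p hp ⟶ V where
  hom := FGModuleCat.ofHom p.subtype
  comm := fun g => by ext x; rfl

theorem mono_inj {V W : FDRep ℂ K} (φ : V ⟶ W) [Mono φ] :
    Function.Injective (ConcreteCategory.hom φ.hom : V →ₗ[ℂ] W) := by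
  rw [← LinearMap.ker_eq_bot]
  set p : Submodule ℂ V := LinearMap.ker (ConcreteCategory.hom φ.hom : V →ₗ[ℂ] W) with hp
  have hinv : ∀ (g : K) x, x ∈ p → V.ρ g x ∈ p := by
    intro g x hx
    have h := fdrep_comm φ g x
    simp only [hp, LinearMap.mem_ker] at hx ⊢
    exact h.trans ((congrArg (W.ρ g) hx).trans (map_zero _))
  have h0 : subrepIncl V p hinv ≫ φ = (0 : subrep V p hinv ⟶ V) ≫ φ := by
    rw [zero_comp]
    apply Action.hom_ext
    ext x
    exact (x.2 : φ.hom x.1 = 0).trans rfl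
  have h1 := (cancel_mono φ).mp h0
  rw [eq_bot_iff]
  intro x hx
  have hx0 := congrArg (fun (ψ : subrep V p hinv ⟶ V) => ψ.hom ⟨x, hx⟩) h1
  exact hx0

end Subrep

noncomputable section TopSec
variable {K : Type} [Group K] [Fintype K]

/-- The operator attached to a class function `f`. -/
def Tavg (f : K → ℂ) (V : FDRep ℂ K) : V →ₗ[ℂ] V :=
  ∑ x : K, f x • (V.ρ x⁻¹ : V →ₗ[ℂ] V)

theorem Tavg_apply (f : K → ℂ) (V : FDRep ℂ K) (v : V) :
    Tavg f V v = ∑ x : K, f x • (V.ρ x⁻¹ v) := by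
  simp [Tavg, LinearMap.sum_apply]

theorem Tavg_comm (f : K → ℂ) (hf : ∀ h x : K, f (h * x * h⁻¹) = f x) (V : FDRep ℂ K) (g : K) :
    (V.ρ g) ∘ₗ Tavg f V = Tavg f V ∘ₗ (V.ρ g) := by
  ext v
  rw [LinearMap.comp_apply, LinearMap.comp_apply, Tavg_apply, Tavg_apply, map_sum]
  refine Fintype.sum_bijective (fun x : K => g * x * g⁻¹)
    (((Equiv.mulRight g⁻¹).bijective.comp (Equiv.mulLeft g).bijective)) _ _ fun x => ?_
  rw [hf g x, map_smul]
  congr 1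
  have h1 : V.ρ g (V.ρ x⁻¹ v) = V.ρ (g * x⁻¹) v := by
    rw [map_mul]; rfl
  have h2 : V.ρ (g * x * g⁻¹)⁻¹ (V.ρ g v) = V.ρ ((g * x * g⁻¹)⁻¹ * g) v := by
    rw [map_mul]; rfl
  rw [h1, h2]
  congr 1
  group

/-- `Tavg` as a morphism of representations. -/
def TavgHom (f : K → ℂ) (hf : ∀ h x : K, f (h * x * h⁻¹) = f x) (V : FDRep ℂ K) : V ⟶ V where
  hom := FGModuleCat.ofHom (Tavg f V)
  comm := fun g => by
    apply FGModuleCat.hom_ext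
    exact (Tavg_comm f hf V g).symm

theorem Tavg_nat (f : K → ℂ) {V W : FDRep ℂ K} (φ : V ⟶ W) (v : V) :
    φ.hom (Tavg f V v) = Tavg f W (φ.hom v) := by
  rw [Tavg_apply, Tavg_apply, map_sum]
  refine Finset.sum_congr rfl fun x _ => ?_
  rw [map_smul]
  congr 1
  exact fdrep_comm φ x⁻¹ v

theorem Tavg_simple_zero (f : K → ℂ) (hf : ∀ h x : K, f (h * x * h⁻¹) = f x)
    (V : FDRep ℂ K) [sv : Simple V] (htr : ∑ x : K, f x * V.character x⁻¹ = 0) :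
    Tavg f V = 0 := by
  have hid : (𝟙 V : V ⟶ V) ≠ 0 := id_nonzero V
  have h1 : finrank ℂ (V ⟶ V) = 1 := by
    rw [FDRep.finrank_hom_simple_simple V V, if_pos ⟨Iso.refl V⟩]
  obtain ⟨c, hc⟩ : ∃ c : ℂ, TavgHom f hf V = c • 𝟙 V := by
    have hspan := (finrank_eq_one_iff_of_nonzero' (𝟙 V : V ⟶ V) hid).mp h1
    obtain ⟨c, hc⟩ := hspan (TavgHom f hf V)
    exact ⟨c, hc.symm⟩
  have hhom : Tavg f V = c • (LinearMap.id : V →ₗ[ℂ] V) := congrArg (fun ψ => ψ.hom.hom.hom) hc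
  have htrace : LinearMap.trace ℂ V (Tavg f V) = 0 := by
    rw [Tavg, map_sum, ← htr]
    refine Finset.sum_congr rfl fun x _ => ?_
    rw [LinearMap.map_smul]
    simp [FDRep.character, smul_eq_mul]
  have hnt : Nontrivial V := by
    by_contra hnt
    have hsub : Subsingleton V := not_nontrivial_iff_subsingleton.mp hnt
    apply hid
    apply Action.hom_ext
    ext w
    exact hsub.elim _ _
  have hdim : finrank ℂ V ≠ 0 := finrank_pos.ne'
  have hc0 : c = 0 := by
    rw [hhom, map_smul, LinearMap.trace_id] at htrace
    rcases (by simpa [smul_eq_mul] using htrace : c = 0 ∨ finrank ℂ V = 0) with h | h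
    · exact h
    · exact absurd h hdim
  rw [hhom, hc0, zero_smul]

theorem Tavg_zero_of_iso (f : K → ℂ) {V W : FDRep ℂ K} (e : V ≅ W) (hW : Tavg f W = 0) :
    Tavg f V = 0 := by
  ext v
  have h1 : e.hom.hom (Tavg f V v) = Tavg f W (e.hom.hom v) := Tavg_nat f e.hom v
  rw [hW] at h1
  have h2 : e.inv.hom (e.hom.hom (Tavg f V v)) = Tavg f V v :=
    congrArg (fun ψ => (ConcreteCategory.hom ψ) (Tavg f V v)) (Action.hom_inv_hom e)
  rw [h1] at h2
  simpa using h2.symm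

end TopSec

noncomputable section ClassFun
variable {K : Type} [Group K]

open MonoidAlgebra in
theorem classfun_zero [ft : Fintype K] {ι : Type} [Fintype ι] (ρ : ι → FDRep ℂ K)
    (hsimple : ∀ i, Simple (ρ i))
    (hcomplete : ∀ W : FDRep ℂ K, Simple W → ∃ i, Nonempty (W ≅ ρ i))
    (f : K → ℂ) (hf : ∀ h x : K, f (h * x * h⁻¹) = f x)
    (horth : ∀ i, ∑ x : K, f x * (ρ i).character x⁻¹ = 0) (y : K) : f y = 0 := by
  haveI : Invertible ((Fintype.card K : ℂ)) :=
    invertibleOfNonzero (by exact_mod_cast Fintype.card_ne_zero)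
  haveI finA : FiniteDimensional ℂ (MonoidAlgebra ℂ K) :=
    FiniteDimensional.of_injective (MonoidAlgebra.coeffLinearEquiv ℂ).toLinearMap
      (MonoidAlgebra.coeffLinearEquiv ℂ (S := ℂ) (M := K)).injective
  set t : MonoidAlgebra ℂ K := ∑ x : K, MonoidAlgebra.single x⁻¹ (f x) with ht
  -- `Tavg` vanishes on all simple representations
  have hTz : ∀ (W : FDRep ℂ K), Simple W → Tavg f W = 0 := by
    intro W hW
    obtain ⟨i, ⟨e⟩⟩ := hcomplete W hW
    exact Tavg_zero_of_iso f e
      (by haveI := hsimple i; exact Tavg_simple_zero f hf (ρ i) (horth i))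
  -- `t` is central
  have hcomm : ∀ v : MonoidAlgebra ℂ K, t * v = v * t := by
    intro v
    induction v using MonoidAlgebra.induction_linear with
    | zero => simp
    | add a b ha hb => rw [mul_add, add_mul, ha, hb]
    | single h r =>
      rw [ht, Finset.sum_mul, Finset.mul_sum]
      refine Fintype.sum_bijective (fun x : K => h⁻¹ * x * h)
        ((Equiv.mulRight h).bijective.comp (Equiv.mulLeft h⁻¹).bijective) _ _ fun x => ?_
      rw [MonoidAlgebra.single_mul_single, MonoidAlgebra.single_mul_single]
      have hfx : f (h⁻¹ * x * h) = f x := by simpa using hf h⁻¹ x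
      rw [hfx]
      congr 1
      · group
      · ring
  -- every simple submodule of the group algebra is annihilated by `t`
  have hkill : ∀ S : Submodule (MonoidAlgebra ℂ K) (MonoidAlgebra ℂ K),
      IsSimpleModule (MonoidAlgebra ℂ K) ↥S → ∀ v ∈ S, t * v = 0 := by
    intro S hS v hv
    haveI hS' := hS
    have hatom : IsAtom S := isSimpleModule_iff_isAtom.mp hS
    set U : Submodule ℂ (MonoidAlgebra ℂ K) := S.restrictScalars ℂ with hU
    have hmemU : ∀ {w : MonoidAlgebra ℂ K}, w ∈ S → w ∈ U := fun hw => hw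
    have hmulmem : ∀ (g : K) (u : ↥U), MonoidAlgebra.single g (1 : ℂ) * u.1 ∈ U := by
      intro g u
      have : MonoidAlgebra.single g (1 : ℂ) • u.1 ∈ S :=
        S.smul_mem (MonoidAlgebra.single g (1 : ℂ)) u.2
      exact hmemU (by simpa [smul_eq_mul] using this)
    set σ : Representation ℂ K ↥U :=
      { toFun := fun g =>
          { toFun := fun u => ⟨MonoidAlgebra.single g (1 : ℂ) * u.1, hmulmem g u⟩
            map_add' := fun u u' => by ext; simp [mul_add]
            map_smul' := fun c u => by ext; simp [mul_smul_comm] }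
        map_one' := by
          ext u
          simp [MonoidAlgebra.one_def]
        map_mul' := fun g h => by
          ext u
          simp [← MonoidAlgebra.single_mul_single, mul_assoc] } with hσ
    set W : FDRep ℂ K := FDRep.of σ with hW
    have hσapp : ∀ (g : K) (u : ↥U), (W.ρ g u).1 = MonoidAlgebra.single g (1 : ℂ) * u.1 :=
      fun g u => rfl
    -- a nonzero element of S
    obtain ⟨v₀, hv₀S, hv₀⟩ := Submodule.ne_bot_iff S |>.mp hatom.1
    -- W is simple
    haveI hWsimple : Simple W := by
      constructor
      intro Y φ hm
      constructor
      · intro hiso hz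
        have h10 : (𝟙 W : W ⟶ W) = 0 := by
          calc (𝟙 W : W ⟶ W) = inv φ ≫ φ := (IsIso.inv_hom_id φ).symm
            _ = inv φ ≫ 0 := congrArg (fun ψ => inv φ ≫ ψ) hz
            _ = 0 := comp_zero
        have hz0 : (⟨v₀, hmemU hv₀S⟩ : ↥U) = 0 := by
          calc (⟨v₀, hmemU hv₀S⟩ : ↥U) = (𝟙 W : W ⟶ W).hom ⟨v₀, hmemU hv₀S⟩ := rfl
            _ = (0 : W ⟶ W).hom ⟨v₀, hmemU hv₀S⟩ := by rw [h10]
            _ = 0 := rfl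
        exact hv₀ (congrArg Subtype.val hz0)
      · intro hnz
        haveI := hm
        have hinj : Function.Injective (ConcreteCategory.hom φ.hom : Y →ₗ[ℂ] W) := mono_inj φ
        have hclos : ∀ (a : MonoidAlgebra ℂ K) (w : MonoidAlgebra ℂ K),
            (∃ u : Y, (φ.hom u).1 = w) → ∃ u : Y, (φ.hom u).1 = a * w := by
          intro a
          induction a using MonoidAlgebra.induction_linear with
          | zero => intro w _; exact ⟨0, by simp⟩
          | add a b ha hb =>
            intro w hw
            obtain ⟨u, hu⟩ := ha w hw
            obtain ⟨u', hu'⟩ := hb w hw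
            refine ⟨u + u', ?_⟩
            rw [map_add]
            have hadd' : (φ.hom u + φ.hom u').1 = (φ.hom u).1 + (φ.hom u').1 := rfl
            rw [hadd', hu, hu', ← add_mul]
          | single g c =>
            rintro w ⟨u, hu⟩
            refine ⟨c • Y.ρ g u, ?_⟩
            rw [map_smul]
            have h1 : φ.hom (Y.ρ g u) = W.ρ g (φ.hom u) := fdrep_comm φ g u
            show (c • φ.hom (Y.ρ g u)).1 = MonoidAlgebra.single g c * w
            rw [h1]
            show c • (W.ρ g (φ.hom u)).1 = MonoidAlgebra.single g c * w
            rw [hσapp, hu, ← smul_mul_assoc]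
            congr 1
            rw [MonoidAlgebra.smul_single]
            simp
        set S' : Submodule (MonoidAlgebra ℂ K) (MonoidAlgebra ℂ K) :=
          { carrier := {w | ∃ u : Y, (φ.hom u).1 = w}
            zero_mem' := ⟨0, by simp⟩
            add_mem' := by
              rintro a b ⟨u, hu⟩ ⟨u', hu'⟩
              refine ⟨u + u', ?_⟩
              rw [map_add]
              show (φ.hom u).1 + (φ.hom u').1 = a + b
              rw [hu, hu']
            smul_mem' := fun a w hw => by
              simpa [smul_eq_mul] using hclos a w hw } with hS'def
        have hS'S : S' ≤ S := by
          rintro w ⟨u, hu⟩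
          exact hu ▸ (φ.hom u).2
        have hS'bot : S' ≠ ⊥ := by
          intro hb
          apply hnz
          apply Action.hom_ext
          refine FGModuleCat.hom_ext (LinearMap.ext fun u => ?_)
          have hmem : (φ.hom u).1 ∈ S' := ⟨u, rfl⟩
          rw [hb] at hmem
          have h0 : (φ.hom u).1 = 0 := hmem
          exact (Submodule.coe_eq_zero.mp h0).trans rfl
        have hS'eq : S' = S := by
          rcases hS'S.lt_or_eq with hlt | heq
          · exact absurd (hatom.2 S' hlt) hS'bot
          · exact heq
        have hsurj : Function.Surjective (ConcreteCategory.hom φ.hom : Y →ₗ[ℂ] W) := by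
          intro w
          have hw : w.1 ∈ S' := by rw [hS'eq]; exact w.2
          obtain ⟨u, hu⟩ := hw
          exact ⟨u, Subtype.ext hu⟩
        set e : Y ≃ₗ[ℂ] ↥U := LinearEquiv.ofBijective (ConcreteCategory.hom φ.hom : Y →ₗ[ℂ] W) ⟨hinj, hsurj⟩
          with he
        have heapp : ∀ u : Y, e u = φ.hom u := fun u => rfl
        refine ⟨⟨{ hom := FGModuleCat.ofHom (e.symm : ↥U →ₗ[ℂ] Y), comm := fun g => ?_ }, ?_, ?_⟩⟩
        · ext w
          show e.symm (W.ρ g w) = Y.ρ g (e.symm w)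
          apply hinj
          show φ.hom (e.symm (W.ρ g w)) = φ.hom (Y.ρ g (e.symm w))
          rw [← heapp, e.apply_symm_apply, fdrep_comm φ g (e.symm w), ← heapp,
            e.apply_symm_apply]
        · apply Action.hom_ext
          ext u
          exact e.symm_apply_apply u
        · apply Action.hom_ext
          refine FGModuleCat.hom_ext (LinearMap.ext fun w => ?_)
          exact ((heapp (e.symm w)) ▸ e.apply_symm_apply w : φ.hom (e.symm w) = w)
    -- transfer: t kills v
    have hTW : Tavg f W = 0 := hTz W hWsimple
    let ι₀ : (W : Type) →ₗ[ℂ] MonoidAlgebra ℂ K :=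
      { toFun := fun z => z.1
        map_add' := fun _ _ => rfl
        map_smul' := fun _ _ => rfl }
    have hι₀ : ∀ (g : K) (u : (W : Type)), ι₀ (W.ρ g u) = MonoidAlgebra.single g (1 : ℂ) * ι₀ u :=
      fun g u => rfl
    have h0 : Tavg f W ⟨v, hmemU hv⟩ = 0 := by rw [hTW]; rfl
    have h1 : ι₀ (Tavg f W ⟨v, hmemU hv⟩) = t * v := by
      rw [Tavg_apply, map_sum, ht, Finset.sum_mul]
      refine Finset.sum_congr rfl fun x _ => ?_
      rw [map_smul, hι₀]
      show f x • (MonoidAlgebra.single x⁻¹ (1 : ℂ) * v) = _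
      rw [← smul_mul_assoc, MonoidAlgebra.smul_single]
      simp
    rw [← h1, h0, map_zero]
  -- conclude that t = 0
  let N : Submodule (MonoidAlgebra ℂ K) (MonoidAlgebra ℂ K) :=
    { carrier := {v | t * v = 0}
      zero_mem' := mul_zero t
      add_mem' := by
        intro a b ha hb
        show t * (a + b) = 0
        rw [mul_add, ha, hb, add_zero]
      smul_mem' := by
        intro a v hv
        show t * (a • v) = 0
        rw [smul_eq_mul, ← mul_assoc, hcomm a, mul_assoc, hv, mul_zero] }
  have htop : (⊤ : Submodule (MonoidAlgebra ℂ K) (MonoidAlgebra ℂ K)) ≤ N := by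
    rw [← IsSemisimpleModule.sSup_simples_eq_top (MonoidAlgebra ℂ K) (MonoidAlgebra ℂ K)]
    exact sSup_le fun S hS => fun v hv => hkill S hS v hv
  have ht0 : t = 0 := by
    have h1 : (1 : MonoidAlgebra ℂ K) ∈ N := htop Submodule.mem_top
    have : t * 1 = 0 := h1
    rwa [mul_one] at this
  have := congrArg (fun v : MonoidAlgebra ℂ K => v.coeff y⁻¹) ht0
  simp only [ht] at this
  rw [MonoidAlgebra.coeff_sum, Finsupp.finset_sum_apply] at this
  simp only [MonoidAlgebra.coeff_single, Finsupp.single_apply, inv_inj] at this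
  rw [Finset.sum_ite_eq' Finset.univ y (fun x => f x)] at this
  simpa using this

end ClassFun

noncomputable section ColOrth

open scoped Classical in
theorem colOrth {K : Type} [Group K] [ft : Fintype K] {ι : Type} [Fintype ι]
    (ρ : ι → FDRep ℂ K)
    (hsimple : ∀ i, Simple (ρ i))
    (hdistinct : ∀ i i', i ≠ i' → IsEmpty (ρ i ≅ ρ i'))
    (hcomplete : ∀ W : FDRep ℂ K, Simple W → ∃ i, Nonempty (W ≅ ρ i))
    (a b : K) :
    ∑ i : ι, (ρ i).character a⁻¹ * (ρ i).character b =
      if IsConj a b then (Fintype.card (Subgroup.centralizer ({a} : Set K)) : ℂ) else 0 := by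
  haveI : Invertible ((Fintype.card K : ℂ)) :=
    invertibleOfNonzero (by exact_mod_cast Fintype.card_ne_zero)
  set cA : ℂ := (Fintype.card (Subgroup.centralizer ({a} : Set K)) : ℂ) with hcA
  set F : K → ℂ := fun x =>
    (∑ i : ι, (ρ i).character a⁻¹ * (ρ i).character x) - (if IsConj a x then cA else 0) with hF
  have hconj : ∀ h x : K, F (h * x * h⁻¹) = F x := by
    intro h x
    have h1 : ∀ i, (ρ i).character (h * x * h⁻¹) = (ρ i).character x :=
      fun i => FDRep.char_conj (ρ i) x h
    have h2 : IsConj a (h * x * h⁻¹) ↔ IsConj a x := by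
      constructor
      · intro hc
        exact hc.trans (isConj_iff.mpr ⟨h, rfl⟩).symm
      · intro hc
        exact hc.trans (isConj_iff.mpr ⟨h, rfl⟩)
    simp only [hF, h1, h2]
  -- row orthogonality in the convenient form
  have hrow : ∀ i j : ι, ∑ x : K, (ρ i).character x * (ρ j).character x⁻¹ =
      if i = j then (Fintype.card K : ℂ) else 0 := by
    intro i j
    haveI := hsimple i
    haveI := hsimple j
    haveI : Invertible ((Nat.card K : ℂ)) :=
      invertibleOfNonzero (by rw [Nat.card_eq_fintype_card]; exact_mod_cast Fintype.card_ne_zero)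
    have h : (Nat.card K : ℂ)⁻¹ * ∑ x : K, (ρ i).character x * (ρ j).character x⁻¹ =
        if Nonempty (ρ i ≅ ρ j) then 1 else 0 :=
      FDRep.char_orthonormal (ρ i) (ρ j)
    have h5 : ∑ x : K, (ρ i).character x * (ρ j).character x⁻¹ =
        (Fintype.card K : ℂ) • (if Nonempty (ρ i ≅ ρ j) then (1 : ℂ) else 0) := by
      rw [← h, Nat.card_eq_fintype_card, smul_eq_mul, ← mul_assoc,
        mul_inv_cancel₀ (by exact_mod_cast Fintype.card_ne_zero), one_mul]
    rw [h5]
    by_cases hij : i = j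
    · subst hij
      rw [if_pos ⟨Iso.refl _⟩, if_pos rfl, smul_eq_mul, mul_one]
    · rw [if_neg fun ⟨e⟩ => (hdistinct i j hij).false e, if_neg hij, smul_zero]
  have horth : ∀ j, ∑ x : K, F x * (ρ j).character x⁻¹ = 0 := by
    intro j
    have hsplit : ∑ x : K, F x * (ρ j).character x⁻¹ =
        (∑ x : K, (∑ i : ι, (ρ i).character a⁻¹ * (ρ i).character x) * (ρ j).character x⁻¹)
          - ∑ x : K, (if IsConj a x then cA else 0) * (ρ j).character x⁻¹ := by
      rw [← Finset.sum_sub_distrib]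
      refine Finset.sum_congr rfl fun x _ => ?_
      rw [hF]
      ring
    have hS1 : (∑ x : K, (∑ i : ι, (ρ i).character a⁻¹ * (ρ i).character x) *
        (ρ j).character x⁻¹) = (Fintype.card K : ℂ) * (ρ j).character a⁻¹ := by
      calc (∑ x : K, (∑ i : ι, (ρ i).character a⁻¹ * (ρ i).character x) * (ρ j).character x⁻¹)
          = ∑ x : K, ∑ i : ι,
              (ρ i).character a⁻¹ * (ρ i).character x * (ρ j).character x⁻¹ := by
            refine Finset.sum_congr rfl fun x _ => ?_
            rw [Finset.sum_mul]
        _ = ∑ i : ι, ∑ x : K,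
              (ρ i).character a⁻¹ * (ρ i).character x * (ρ j).character x⁻¹ :=
            Finset.sum_comm
        _ = ∑ i : ι, (ρ i).character a⁻¹ *
              (∑ x : K, (ρ i).character x * (ρ j).character x⁻¹) := by
            refine Finset.sum_congr rfl fun i _ => ?_
            rw [Finset.mul_sum]
            refine Finset.sum_congr rfl fun x _ => ?_
            ring
        _ = ∑ i : ι, (ρ i).character a⁻¹ * (if i = j then (Fintype.card K : ℂ) else 0) := by
            refine Finset.sum_congr rfl fun i _ => ?_
            rw [hrow]
        _ = (ρ j).character a⁻¹ * (Fintype.card K : ℂ) := by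
            rw [Finset.sum_eq_single j]
            · rw [if_pos rfl]
            · intro i _ hij
              rw [if_neg hij, mul_zero]
            · intro hj
              exact absurd (Finset.mem_univ j) hj
        _ = (Fintype.card K : ℂ) * (ρ j).character a⁻¹ := mul_comm _ _
    have hS2 : (∑ x : K, (if IsConj a x then cA else 0) * (ρ j).character x⁻¹)
        = (Fintype.card K : ℂ) * (ρ j).character a⁻¹ := by
      have hcount : ∀ x : K, (if IsConj a x then cA else 0) =
          ((Finset.univ.filter (fun c : K => c * a * c⁻¹ = x)).card : ℂ) := by
        intro x
        rw [← Fintype.card_subtype]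
        rw [card_conj_src a x]
        split_ifs with h
        · rfl
        · simp
      calc (∑ x : K, (if IsConj a x then cA else 0) * (ρ j).character x⁻¹)
          = ∑ x : K, ∑ _c ∈ Finset.univ.filter (fun c : K => c * a * c⁻¹ = x),
              (ρ j).character x⁻¹ := by
            refine Finset.sum_congr rfl fun x _ => ?_
            rw [hcount, Finset.sum_const, nsmul_eq_mul]
        _ = ∑ x : K, ∑ c ∈ Finset.univ.filter (fun c : K => c * a * c⁻¹ = x),
              (ρ j).character ((c * a * c⁻¹)⁻¹) := by
            refine Finset.sum_congr rfl fun x _ => ?_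
            refine Finset.sum_congr rfl fun c hc => ?_
            rw [(Finset.mem_filter.mp hc).2]
        _ = ∑ c : K, (ρ j).character ((c * a * c⁻¹)⁻¹) := by
            exact Finset.sum_fiberwise Finset.univ (fun c : K => c * a * c⁻¹)
              (fun c => (ρ j).character ((c * a * c⁻¹)⁻¹))
        _ = ∑ _c : K, (ρ j).character a⁻¹ := by
            refine Finset.sum_congr rfl fun c _ => ?_
            have : (c * a * c⁻¹)⁻¹ = c * a⁻¹ * c⁻¹ := by group
            rw [this, FDRep.char_conj]
        _ = (Fintype.card K : ℂ) * (ρ j).character a⁻¹ := by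
            rw [Finset.sum_const, nsmul_eq_mul, Finset.card_univ]
    rw [hsplit, hS1, hS2, sub_self]
  have hFb : F b = 0 := classfun_zero ρ hsimple hcomplete F hconj horth b
  exact sub_eq_zero.mp hFb

set_option maxHeartbeats 2000000 in
open scoped Classical in
theorem generalized_orthogonality
    {H : Type} [Group H] [Fintype H]
    (G : Subgroup H) (hN : G.Normal)
    (s : H ⧸ G → H) (hs : ∀ q, QuotientGroup.mk' G (s q) = q)
    {ι : Type} [Fintype ι] (ρ : ι → FDRep ℂ ↥G)
    (hsimple : ∀ i, Simple (ρ i))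
    (hdistinct : ∀ i i', i ≠ i' → IsEmpty (ρ i ≅ ρ i'))
    (hcomplete : ∀ W : FDRep ℂ ↥G, Simple W → ∃ i, Nonempty (W ≅ ρ i))
    (g₁ g₂ : ↥G) :
    (∑ i : ι, ∑ q : H ⧸ G,
        (ρ i).character g₁⁻¹ *
          (ρ i).character ⟨s q * ↑g₂ * (s q)⁻¹, hN.conj_mem ↑g₂ g₂.2 (s q)⟩) =
      if IsConj (g₁ : H) (g₂ : H) then
        (Fintype.card (Subgroup.centralizer ({(g₁ : H)} : Set H)) : ℂ)
      else 0 := by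
  set c : H ⧸ G → ↥G := fun q => ⟨s q * ↑g₂ * (s q)⁻¹, hN.conj_mem ↑g₂ g₂.2 (s q)⟩ with hc
  -- the fiberwise bijection
  have hfib : ∀ q : H ⧸ G,
      Fintype.card {h : H // h * ↑g₂ * h⁻¹ = ↑g₁ ∧ QuotientGroup.mk' G h = q}
        = Fintype.card {u : ↥G // u * c q * u⁻¹ = g₁} := by
    intro q
    apply Fintype.card_congr
    have hmem : ∀ (h : H), QuotientGroup.mk' G h = q → h * (s q)⁻¹ ∈ G := by
      intro h hq
      have h1 : (QuotientGroup.mk (s q) : H ⧸ G) = QuotientGroup.mk h := by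
        rw [show (QuotientGroup.mk (s q) : H ⧸ G) = QuotientGroup.mk' G (s q) from rfl, hs q, ← hq]
        rfl
      have h2 : (s q)⁻¹ * h ∈ G := QuotientGroup.eq.mp h1
      have h3 : (s q) * ((s q)⁻¹ * h) * (s q)⁻¹ ∈ G := hN.conj_mem _ h2 _
      simpa [mul_assoc] using h3
    refine ⟨fun h => ⟨⟨h.1 * (s q)⁻¹, hmem h.1 h.2.2⟩, ?_⟩, fun u => ⟨u.1.1 * s q, ?_, ?_⟩,
      fun h => ?_, fun u => ?_⟩
    · -- conjugation condition in ↥G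
      have hP := h.2.1
      apply Subtype.ext
      show (h.1 * (s q)⁻¹) * (s q * ↑g₂ * (s q)⁻¹) * (h.1 * (s q)⁻¹)⁻¹ = (g₁ : H)
      calc (h.1 * (s q)⁻¹) * (s q * ↑g₂ * (s q)⁻¹) * (h.1 * (s q)⁻¹)⁻¹
          = h.1 * ↑g₂ * h.1⁻¹ := by group
        _ = (g₁ : H) := hP
    · -- conjugation condition in H
      have hu := congrArg (Subtype.val) u.2
      have hu' : u.1.1 * (s q * ↑g₂ * (s q)⁻¹) * u.1.1⁻¹ = (g₁ : H) := hu
      calc u.1.1 * s q * ↑g₂ * (u.1.1 * s q)⁻¹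
          = u.1.1 * (s q * ↑g₂ * (s q)⁻¹) * u.1.1⁻¹ := by group
        _ = (g₁ : H) := hu'
    · -- coset condition
      rw [map_mul, hs q]
      have : QuotientGroup.mk' G u.1.1 = 1 := (QuotientGroup.eq_one_iff _).mpr u.1.2
      rw [this, one_mul]
    · apply Subtype.ext
      show h.1 * (s q)⁻¹ * s q = h.1
      group
    · apply Subtype.ext
      apply Subtype.ext
      show u.1.1 * s q * (s q)⁻¹ = u.1.1
      group
  -- fiber decomposition of the H-level count
  have hsum : Fintype.card {h : H // h * ↑g₂ * h⁻¹ = ↑g₁}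
      = ∑ q : H ⧸ G,
          Fintype.card {h : H // h * ↑g₂ * h⁻¹ = ↑g₁ ∧ QuotientGroup.mk' G h = q} := by
    calc Fintype.card {h : H // h * ↑g₂ * h⁻¹ = ↑g₁}
        = (Finset.univ.filter (fun h : H => h * ↑g₂ * h⁻¹ = ↑g₁)).card :=
          Fintype.card_subtype _
      _ = ∑ q : H ⧸ G, ((Finset.univ.filter (fun h : H => h * ↑g₂ * h⁻¹ = ↑g₁)).filter
            (fun h => QuotientGroup.mk' G h = q)).card :=
          Finset.card_eq_sum_card_fiberwise (fun x _ => Finset.mem_univ _)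
      _ = ∑ q : H ⧸ G,
            Fintype.card {h : H // h * ↑g₂ * h⁻¹ = ↑g₁ ∧ QuotientGroup.mk' G h = q} := by
          refine Finset.sum_congr rfl fun q _ => ?_
          rw [Finset.filter_filter, Fintype.card_subtype]
  -- now put everything together
  calc (∑ i : ι, ∑ q : H ⧸ G, (ρ i).character g₁⁻¹ * (ρ i).character (c q))
      = ∑ q : H ⧸ G, ∑ i : ι, (ρ i).character g₁⁻¹ * (ρ i).character (c q) :=
        Finset.sum_comm
    _ = ∑ q : H ⧸ G, ((Fintype.card {u : ↥G // u * c q * u⁻¹ = g₁} : ℕ) : ℂ) := by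
        refine Finset.sum_congr rfl fun q _ => ?_
        rw [colOrth ρ hsimple hdistinct hcomplete g₁ (c q)]
        have h2 : Fintype.card {u : ↥G // u * c q * u⁻¹ = g₁} =
            if IsConj (c q) g₁ then Fintype.card (Subgroup.centralizer ({g₁} : Set ↥G)) else 0 :=
          by convert card_conj_tgt (c q) g₁ using 2
        rw [h2]
        by_cases hcj : IsConj g₁ (c q)
        · rw [if_pos hcj, if_pos (isConj_comm.mp hcj)]
        · rw [if_neg hcj, if_neg (fun hx => hcj (isConj_comm.mp hx))]
          simp
    _ = ((∑ q : H ⧸ G, Fintype.card {u : ↥G // u * c q * u⁻¹ = g₁} : ℕ) : ℂ) := by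
        rw [Nat.cast_sum]
    _ = ((Fintype.card {h : H // h * ↑g₂ * h⁻¹ = ↑g₁} : ℕ) : ℂ) := by
        rw [hsum]
        congr 1
        exact (Finset.sum_congr rfl fun q _ => (hfib q).symm)
    _ = if IsConj (g₁ : H) (g₂ : H) then
          (Fintype.card (Subgroup.centralizer ({(g₁ : H)} : Set H)) : ℂ) else 0 := by
        have h3 : Fintype.card {h : H // h * ↑g₂ * h⁻¹ = ↑g₁} =
            if IsConj ((g₂ : H)) ((g₁ : H)) then
              Fintype.card (Subgroup.centralizer ({(g₁ : H)} : Set H)) else 0 :=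
          by convert card_conj_tgt ((g₂ : H)) ((g₁ : H)) using 2
        rw [h3]
        by_cases hcj : IsConj (g₁ : H) (g₂ : H)
        · rw [if_pos (isConj_comm.mp hcj), if_pos hcj]
        · rw [if_neg (fun hx => hcj (isConj_comm.mp hx)), if_neg hcj]
          simp
end ColOrth
end

section
/- Let G be a normal subgroup of a finite group H with quotient map j: H → Q, and fix a section s of j with s(1)=1 and cocycle τ(q₁,q₂) = s(q₁)s(q₂)s(q₁q₂)⁻¹. Suppose G is central in H (so in particular G is abelian and Q acts trivially on G). Then for q ∈ Q, the number of conjugacy classes of H contained in j⁻¹(⟨q⟩) equals the number of characters χ ∈ Ĝ such that χ(τ(q₁,q)·τ(q,q₁)⁻¹) = 1 for all q₁ in the centralizer C(q) of q in Q. -/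
/-- The character group of a finite commutative group has the same cardinality. -/
lemma card_monoidHom_units_complex (A : Type*) [CommGroup A] [Finite A] :
    Nat.card (A →* ℂˣ) = Nat.card A := by
  classical
  cases nonempty_fintype A
  have e : (A →* ℂˣ) ≃ AddChar (Additive A) ℂ :=
    { toFun := fun f => AddChar.toMonoidHomEquiv.symm
        ((Units.coeHom ℂ).comp (f.comp (MulEquiv.multiplicativeAdditive A).toMonoidHom))
      invFun := fun ψ => (ψ.toMonoidHom.toHomUnits).comp
        (MulEquiv.multiplicativeAdditive A).symm.toMonoidHom
      left_inv := by
        intro f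
        ext x
        rfl
      right_inv := by
        intro ψ
        ext x
        rfl }
  calc Nat.card (A →* ℂˣ) = Nat.card (AddChar (Additive A) ℂ) := Nat.card_congr e
    _ = Fintype.card (AddChar (Additive A) ℂ) := Nat.card_eq_fintype_card
    _ = Fintype.card (Additive A) := AddChar.card_eq
    _ = Nat.card (Additive A) := Nat.card_eq_fintype_card.symm
    _ = Nat.card A := Nat.card_congr Additive.toMul

theorem conjugacy_count_central_extension
    {H : Type*} [Group H] [Fintype H]
    (G : Subgroup H) [G.Normal] (hG : G ≤ Subgroup.center H)
    (s : H ⧸ G → H) (hs : ∀ q, QuotientGroup.mk' G (s q) = q) (hs1 : s 1 = 1)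
    (τ : (H ⧸ G) → (H ⧸ G) → ↥G)
    (hτ : ∀ q₁ q₂, (τ q₁ q₂ : H) = s q₁ * s q₂ * (s (q₁ * q₂))⁻¹)
    (q : H ⧸ G) :
    Nat.card {c : ConjClasses H //
        ConjClasses.map (QuotientGroup.mk' G) c = ConjClasses.mk q} =
      Nat.card {χ : ↥G →* ℂˣ //
        ∀ q₁ ∈ Subgroup.centralizer ({q} : Set (H ⧸ G)),
          χ (τ q₁ q * (τ q q₁)⁻¹) = 1} := by
  classical
  set j := QuotientGroup.mk' G with hj
  have ht : j (s q) = q := hs q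
  -- elements of G are central
  have hc : ∀ a : H, a ∈ G → ∀ h : H, h * a = a * h := by
    intro a ha h
    exact (Subgroup.mem_center_iff.mp (hG ha) h)
  have hmemC : ∀ q₁, q₁ ∈ Subgroup.centralizer ({q} : Set (H ⧸ G)) ↔ q * q₁ = q₁ * q := by
    intro q₁
    constructor
    · intro h; exact h q rfl
    · intro h x hx; cases hx; exact h
  -- elements of τ-type are commutators
  have hcoe : ∀ q₁ ∈ Subgroup.centralizer ({q} : Set (H ⧸ G)),
      ((τ q₁ q * (τ q q₁)⁻¹ : ↥G) : H) = s q₁ * s q * (s q₁)⁻¹ * (s q)⁻¹ := by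
    intro q₁ hq₁
    have hcm : q * q₁ = q₁ * q := (hmemC q₁).mp hq₁
    push_cast
    rw [hτ, hτ, hcm]
    group
  -- commutators with s q are in G, for centralizing q₁
  have hφG : ∀ q₁ ∈ Subgroup.centralizer ({q} : Set (H ⧸ G)),
      s q₁ * s q * (s q₁)⁻¹ * (s q)⁻¹ ∈ G := by
    intro q₁ hq₁
    have hcm : q * q₁ = q₁ * q := (hmemC q₁).mp hq₁
    have : j (s q₁ * s q * (s q₁)⁻¹ * (s q)⁻¹) = 1 := by
      simp only [map_mul, map_inv, hs]
      rw [← hcm]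
      group
    exact (QuotientGroup.eq_one_iff _).mp this
  -- the subgroup K of G
  set Kcar : Set ↥G := {a : ↥G | ∃ q₁ ∈ Subgroup.centralizer ({q} : Set (H ⧸ G)),
      (a : H) = s q₁ * s q * (s q₁)⁻¹ * (s q)⁻¹} with hKcar
  have Konemem : (1 : ↥G) ∈ Kcar := by
    refine ⟨1, one_mem _, ?_⟩
    simp [hs1]
  have Kmul : ∀ {a b : ↥G}, a ∈ Kcar → b ∈ Kcar → a * b ∈ Kcar := by
    rintro a b ⟨q₁, hq₁, ha⟩ ⟨q₂, hq₂, hb⟩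
    refine ⟨q₁ * q₂, mul_mem hq₁ hq₂, ?_⟩
    have hs12 : s (q₁ * q₂) = (τ q₁ q₂ : H)⁻¹ * (s q₁ * s q₂) := by
      rw [hτ]; group
    have hamem : s q₁ * s q * (s q₁)⁻¹ * (s q)⁻¹ ∈ G := ha ▸ a.2
    have hbmem : s q₂ * s q * (s q₂)⁻¹ * (s q)⁻¹ ∈ G := hb ▸ b.2
    have stepA : s (q₁ * q₂) * s q * (s (q₁ * q₂))⁻¹ * (s q)⁻¹
        = s q₁ * s q₂ * s q * (s q₂)⁻¹ * (s q₁)⁻¹ * (s q)⁻¹ := by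
      calc s (q₁ * q₂) * s q * (s (q₁ * q₂))⁻¹ * (s q)⁻¹
          = (τ q₁ q₂ : H)⁻¹ * ((s q₁ * s q₂) * s q * (s q₁ * s q₂)⁻¹ * (τ q₁ q₂ : H)) * (s q)⁻¹ := by
            rw [hs12]; group
        _ = (τ q₁ q₂ : H)⁻¹ * ((τ q₁ q₂ : H) * ((s q₁ * s q₂) * s q * (s q₁ * s q₂)⁻¹)) * (s q)⁻¹ := by
            rw [hc _ (τ q₁ q₂).2 ((s q₁ * s q₂) * s q * (s q₁ * s q₂)⁻¹)]
        _ = s q₁ * s q₂ * s q * (s q₂)⁻¹ * (s q₁)⁻¹ * (s q)⁻¹ := by group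
    have stepB : s q₁ * s q₂ * s q * (s q₂)⁻¹ * (s q₁)⁻¹ * (s q)⁻¹
        = (s q₁ * s q * (s q₁)⁻¹ * (s q)⁻¹) * (s q₂ * s q * (s q₂)⁻¹ * (s q)⁻¹) := by
      calc s q₁ * s q₂ * s q * (s q₂)⁻¹ * (s q₁)⁻¹ * (s q)⁻¹
          = s q₁ * (s q₂ * s q * (s q₂)⁻¹ * (s q)⁻¹) * (s q * (s q₁)⁻¹ * (s q)⁻¹) := by group
        _ = (s q₂ * s q * (s q₂)⁻¹ * (s q)⁻¹) * s q₁ * (s q * (s q₁)⁻¹ * (s q)⁻¹) := by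
            rw [hc _ hbmem (s q₁)]
        _ = (s q₂ * s q * (s q₂)⁻¹ * (s q)⁻¹) * (s q₁ * s q * (s q₁)⁻¹ * (s q)⁻¹) := by group
        _ = (s q₁ * s q * (s q₁)⁻¹ * (s q)⁻¹) * (s q₂ * s q * (s q₂)⁻¹ * (s q)⁻¹) :=
            (hc _ hamem _)
    show ((a * b : ↥G) : H) = _
    push_cast
    rw [ha, hb, stepA, stepB]
  have Kinv : ∀ {a : ↥G}, a ∈ Kcar → a⁻¹ ∈ Kcar := by
    rintro a ⟨q₁, hq₁, ha⟩
    refine ⟨q₁⁻¹, inv_mem hq₁, ?_⟩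
    have hw : s q₁⁻¹ = (s q₁)⁻¹ * (τ q₁ q₁⁻¹ : H) := by
      have := hτ q₁ q₁⁻¹
      rw [mul_inv_cancel, hs1] at this
      rw [this]; group
    have hcen := (τ q₁ q₁⁻¹).2
    show ((a⁻¹ : ↥G) : H) = _
    push_cast
    calc (a : H)⁻¹
        = (s q₁)⁻¹ * (a : H)⁻¹ * s q₁ := by
          rw [mul_assoc, ← hc _ (inv_mem a.2) (s q₁)]; group
      _ = (s q₁)⁻¹ * (s q * s q₁ * (s q)⁻¹ * (s q₁)⁻¹) * s q₁ := by
          rw [show (a : H)⁻¹ = s q * s q₁ * (s q)⁻¹ * (s q₁)⁻¹ from by rw [ha]; group]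
      _ = (s q₁)⁻¹ * ((τ q₁ q₁⁻¹ : H) * s q * (τ q₁ q₁⁻¹ : H)⁻¹) * s q₁ * (s q)⁻¹ := by
          rw [show (τ q₁ q₁⁻¹ : H) * s q * (τ q₁ q₁⁻¹ : H)⁻¹ = s q from by
            rw [← hc _ hcen (s q)]; group]
          group
      _ = s q₁⁻¹ * s q * (s q₁⁻¹)⁻¹ * (s q)⁻¹ := by rw [hw]; group
  set K : Subgroup ↥G :=
    { carrier := Kcar
      one_mem' := Konemem
      mul_mem' := Kmul
      inv_mem' := Kinv } with hK
  have hKmem : ∀ a : ↥G, a ∈ K ↔ a ∈ Kcar := fun a => Iff.rfl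
  -- membership in G of coerced elements maps to 1
  have hjg : ∀ g : ↥G, j ((g : H) * s q) = q := by
    intro g
    have h1 : j (g : H) = 1 := (QuotientGroup.eq_one_iff _).mpr g.2
    rw [map_mul, h1, one_mul, ht]
  -- key conjugacy characterization
  have key : ∀ g g' : ↥G,
      ConjClasses.mk ((g : H) * s q) = ConjClasses.mk ((g' : H) * s q) ↔ g' * g⁻¹ ∈ K := by
    intro g g'
    rw [ConjClasses.mk_eq_mk_iff_isConj, isConj_iff]
    constructor
    · rintro ⟨h, hh⟩
      have hq₁C : j h ∈ Subgroup.centralizer ({q} : Set (H ⧸ G)) := by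
        rw [hmemC]
        have h2 := congrArg j hh
        simp only [map_mul, map_inv, hjg] at h2
        -- h2 : j h * q * (j h)⁻¹ = q
        calc q * j h = j h * q * (j h)⁻¹ * j h := by rw [h2]
          _ = j h * q := by group
      have hd : h * (s (j h))⁻¹ ∈ G := by
        have : j (h * (s (j h))⁻¹) = 1 := by
          rw [map_mul, map_inv, hs]
          group
        exact (QuotientGroup.eq_one_iff _).mp this
      have hhtmem : h * s q * h⁻¹ * (s q)⁻¹ ∈ G := by
        have : j (h * s q * h⁻¹ * (s q)⁻¹) = 1 := by
          simp only [map_mul, map_inv, ht]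
          have := (hmemC (j h)).mp hq₁C
          rw [← this]
          group
        exact (QuotientGroup.eq_one_iff _).mp this
      refine ⟨j h, hq₁C, ?_⟩
      have hconj : h * s q * h⁻¹ = s (j h) * s q * (s (j h))⁻¹ := by
        calc h * s q * h⁻¹
            = (h * (s (j h))⁻¹) * (s (j h) * s q * (s (j h))⁻¹) * (h * (s (j h))⁻¹)⁻¹ := by
              group
          _ = s (j h) * s q * (s (j h))⁻¹ := by
              rw [← hc _ hd (s (j h) * s q * (s (j h))⁻¹)]
              group
      show ((g' * g⁻¹ : ↥G) : H) = _
      push_cast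
      have hg' : (g' : H) = (h * ((g : H) * s q) * h⁻¹) * (s q)⁻¹ := by
        rw [hh]; group
      calc (g' : H) * (g : H)⁻¹
          = h * (g : H) * s q * h⁻¹ * (s q)⁻¹ * (g : H)⁻¹ := by rw [hg']; group
        _ = (g : H) * (h * s q * h⁻¹ * (s q)⁻¹) * (g : H)⁻¹ := by
            rw [show h * (g : H) = (g : H) * h from hc _ g.2 h]
            group
        _ = (g : H) * (g : H)⁻¹ * (h * s q * h⁻¹ * (s q)⁻¹) := by
            rw [hc _ hhtmem (g : H)]
            group
        _ = h * s q * h⁻¹ * (s q)⁻¹ := by group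
        _ = s (j h) * s q * (s (j h))⁻¹ * (s q)⁻¹ := by rw [hconj]
    · rintro ⟨q₁, hq₁, ha⟩
      refine ⟨s q₁, ?_⟩
      have hX : (g' : H) * (g : H)⁻¹ = s q₁ * s q * (s q₁)⁻¹ * (s q)⁻¹ := by
        have : ((g' * g⁻¹ : ↥G) : H) = s q₁ * s q * (s q₁)⁻¹ * (s q)⁻¹ := ha
        push_cast at this
        exact this
      calc s q₁ * ((g : H) * s q) * (s q₁)⁻¹
          = (g : H) * (s q₁ * s q * (s q₁)⁻¹ * (s q)⁻¹) * s q := by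
            rw [← mul_assoc, show s q₁ * (g : H) = (g : H) * s q₁ from hc _ g.2 (s q₁)]
            group
        _ = (g : H) * ((g' : H) * (g : H)⁻¹) * s q := by rw [hX]
        _ = (g' : H) * s q := by
            rw [show (g : H) * ((g' : H) * (g : H)⁻¹) = (g' : H) from by
              rw [← mul_assoc, ← hc _ g.2 (g' : H)]; group]
  -- G is commutative
  have hcomm : ∀ a b : ↥G, a * b = b * a := by
    intro a b
    exact Subtype.ext (hc _ a.2 (b : H)).symm
  haveI hKn : K.Normal := by
    constructor
    intro a ha g
    rwa [show g * a * g⁻¹ = a from by rw [hcomm g a]; group]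
  -- Step 1 : LHS = Nat.card (↥G ⧸ K)
  have step1 : Nat.card {c : ConjClasses H //
      ConjClasses.map j c = ConjClasses.mk q} = Nat.card (↥G ⧸ K) := by
    have hmapmk : ∀ a : H, ConjClasses.map j (ConjClasses.mk a) = ConjClasses.mk (j a) :=
      fun a => rfl
    let f : ↥G → {c : ConjClasses H // ConjClasses.map j c = ConjClasses.mk q} :=
      fun g => ⟨ConjClasses.mk ((g : H) * s q), by rw [hmapmk, hjg]⟩
    have hwd : ∀ g g' : ↥G, (QuotientGroup.mk g : ↥G ⧸ K) = QuotientGroup.mk g' →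
        f g = f g' := by
      intro g g' h
      have h1 : g⁻¹ * g' ∈ K := QuotientGroup.leftRel_apply.mp (Quotient.exact' h)
      have h2 : g' * g⁻¹ ∈ K := by rwa [hcomm] at h1
      exact Subtype.ext ((key g g').mpr h2)
    let F : ↥G ⧸ K → {c : ConjClasses H // ConjClasses.map j c = ConjClasses.mk q} :=
      fun x => Quotient.liftOn' x f (fun g g' h => hwd g g' (Quotient.sound' h))
    have hFmk : ∀ g : ↥G, F (QuotientGroup.mk g) = f g := fun g => rfl
    have hFbij : Function.Bijective F := by
      constructor
      · intro x y
        induction x using QuotientGroup.induction_on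
        induction y using QuotientGroup.induction_on
        rename_i g g'
        intro h
        rw [hFmk, hFmk] at h
        have h1 : g' * g⁻¹ ∈ K := (key g g').mp (congrArg Subtype.val h)
        have h2 : g⁻¹ * g' ∈ K := by rwa [hcomm] at h1
        exact Quotient.sound' (QuotientGroup.leftRel_apply.mpr h2)
      · rintro ⟨c, hcq⟩
        obtain ⟨h₀, rfl⟩ := ConjClasses.exists_rep c
        rw [hmapmk, ConjClasses.mk_eq_mk_iff_isConj, isConj_iff] at hcq
        obtain ⟨x, hx⟩ := hcq
        have hgG : (s x * h₀ * (s x)⁻¹) * (s q)⁻¹ ∈ G := by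
          have : j ((s x * h₀ * (s x)⁻¹) * (s q)⁻¹) = 1 := by
            rw [map_mul, map_mul, map_mul, map_inv, map_inv, hs, ht, hx]
            group
          exact (QuotientGroup.eq_one_iff _).mp this
        refine ⟨QuotientGroup.mk ⟨(s x * h₀ * (s x)⁻¹) * (s q)⁻¹, hgG⟩, ?_⟩
        rw [hFmk]
        refine Subtype.ext ?_
        show ConjClasses.mk (((s x * h₀ * (s x)⁻¹) * (s q)⁻¹) * s q) = ConjClasses.mk h₀
        rw [show ((s x * h₀ * (s x)⁻¹) * (s q)⁻¹) * s q = s x * h₀ * (s x)⁻¹ from by group]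
        exact ConjClasses.mk_eq_mk_iff_isConj.mpr
          (isConj_iff.mpr ⟨(s x)⁻¹, by group⟩)
    exact Nat.card_congr (Equiv.ofBijective F hFbij).symm
  -- Step 2 : RHS = Nat.card (↥G ⧸ K →* ℂˣ)
  have hcondK : ∀ χ : ↥G →* ℂˣ,
      (∀ q₁ ∈ Subgroup.centralizer ({q} : Set (H ⧸ G)), χ (τ q₁ q * (τ q q₁)⁻¹) = 1) ↔
        ∀ a ∈ K, χ a = 1 := by
    intro χ
    constructor
    · rintro h a ⟨q₁, hq₁, ha⟩
      have h2 : a = τ q₁ q * (τ q q₁)⁻¹ := by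
        apply Subtype.ext
        rw [ha, hcoe q₁ hq₁]
      rw [h2]
      exact h q₁ hq₁
    · intro h q₁ hq₁
      exact h _ ⟨q₁, hq₁, hcoe q₁ hq₁⟩
  have step2 : Nat.card {χ : ↥G →* ℂˣ //
        ∀ q₁ ∈ Subgroup.centralizer ({q} : Set (H ⧸ G)), χ (τ q₁ q * (τ q q₁)⁻¹) = 1} =
      Nat.card (↥G ⧸ K →* ℂˣ) := by
    refine Nat.card_congr
      { toFun := fun χ => QuotientGroup.lift K χ.1 (fun a ha => (hcondK χ.1).mp χ.2 a ha)
        invFun := fun ψ => ⟨ψ.comp (QuotientGroup.mk' K), (hcondK _).mpr (fun a ha => by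
          have h1 : ((a : ↥G) : ↥G ⧸ K) = 1 := (QuotientGroup.eq_one_iff a).mpr ha
          show ψ (QuotientGroup.mk' K a) = 1
          rw [show QuotientGroup.mk' K a = ((a : ↥G) : ↥G ⧸ K) from rfl, h1, map_one])⟩
        left_inv := by
          intro χ
          apply Subtype.ext
          ext a
          rfl
        right_inv := by
          intro ψ
          ext x
          rfl }
  rw [step1, step2]
  -- Step 3 : card of character group
  letI : CommGroup (↥G ⧸ K) :=
    { (QuotientGroup.Quotient.group K : Group (↥G ⧸ K)) with
      mul_comm := by
        intro a b
        obtain ⟨a, rfl⟩ := QuotientGroup.mk_surjective a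
        obtain ⟨b, rfl⟩ := QuotientGroup.mk_surjective b
        show ((a * b : ↥G) : ↥G ⧸ K) = ((b * a : ↥G) : ↥G ⧸ K)
        rw [hcomm a b] }
  exact (card_monoidHom_units_complex (↥G ⧸ K)).symm
end

section
/- Let G be a normal subgroup of a finite group H with quotient Q, section s of the quotient map, and cocycle τ. Fix representatives ρ: G → End(V_ρ) of classes in Ĝ and unitary intertwiners T_q^{[ρ]}: V_ρ → V_{q([ρ])} satisfying ρ(s(q) g s(q)⁻¹) = (T_q^{[ρ]})⁻¹ ∘ q([ρ])(g) ∘ T_q^{[ρ]} for all g ∈ G. Then for all q₁, q₂ ∈ Q and [ρ] ∈ Ĝ, the composite T_{q₂}^{q₁([ρ])} ∘ T_{q₁}^{[ρ]} ∘ ρ(τ(q₁,q₂)) ∘ (T_{q₁q₂}^{[ρ]})⁻¹ is a scalar multiple c^{[ρ]}(q₁,q₂) of the identity on V_{q₁q₂([ρ])}, with c^{[ρ]}(q₁,q₂) ∈ U(1). -/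
theorem intertwiner_composite_is_unit_scalar
    {H : Type*} [Group H] [Fintype H]
    (G : Subgroup H) (hN : G.Normal)
    (s : H ⧸ G → H) (hs : ∀ q, QuotientGroup.mk' G (s q) = q) (hs1 : s 1 = 1)
    (q₁ q₂ : H ⧸ G)
    (hτ : s q₁ * s q₂ * (s (q₁ * q₂))⁻¹ ∈ G)
    {V₁ V₂ V₃ : Type*}
    [NormedAddCommGroup V₁] [InnerProductSpace ℂ V₁] [FiniteDimensional ℂ V₁]
    [NormedAddCommGroup V₂] [InnerProductSpace ℂ V₂] [FiniteDimensional ℂ V₂]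
    [NormedAddCommGroup V₃] [InnerProductSpace ℂ V₃] [FiniteDimensional ℂ V₃]
    [Nontrivial V₃]
    (ρ₁ : Representation ℂ ↥G V₁) (ρ₂ : Representation ℂ ↥G V₂)
    (ρ₃ : Representation ℂ ↥G V₃)
    -- the representations are unitary
    (hu₁ : ∀ (g : ↥G) (v : V₁), ‖ρ₁ g v‖ = ‖v‖)
    (hu₂ : ∀ (g : ↥G) (v : V₂), ‖ρ₂ g v‖ = ‖v‖)
    (hu₃ : ∀ (g : ↥G) (v : V₃), ‖ρ₃ g v‖ = ‖v‖)
    -- the representations are irreducible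
    (hirr₁ : ∀ W : Submodule ℂ V₁, (∀ (g : ↥G), ∀ v ∈ W, ρ₁ g v ∈ W) → W = ⊥ ∨ W = ⊤)
    (hirr₂ : ∀ W : Submodule ℂ V₂, (∀ (g : ↥G), ∀ v ∈ W, ρ₂ g v ∈ W) → W = ⊥ ∨ W = ⊤)
    (hirr₃ : ∀ W : Submodule ℂ V₃, (∀ (g : ↥G), ∀ v ∈ W, ρ₃ g v ∈ W) → W = ⊥ ∨ W = ⊤)
    -- unitary intertwiners: ρ₂ = q₁([ρ₁]), ρ₃ = q₂(q₁([ρ₁])) = (q₁q₂)([ρ₁])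
    (T₁ : V₁ ≃ₗᵢ[ℂ] V₂) (T₂ : V₂ ≃ₗᵢ[ℂ] V₃) (T₁₂ : V₁ ≃ₗᵢ[ℂ] V₃)
    (hT₁ : ∀ (g : ↥G) (v : V₁),
      T₁ (ρ₁ ⟨s q₁ * ↑g * (s q₁)⁻¹, hN.conj_mem ↑g g.2 (s q₁)⟩ v) = ρ₂ g (T₁ v))
    (hT₂ : ∀ (g : ↥G) (v : V₂),
      T₂ (ρ₂ ⟨s q₂ * ↑g * (s q₂)⁻¹, hN.conj_mem ↑g g.2 (s q₂)⟩ v) = ρ₃ g (T₂ v))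
    (hT₁₂ : ∀ (g : ↥G) (v : V₁),
      T₁₂ (ρ₁ ⟨s (q₁ * q₂) * ↑g * (s (q₁ * q₂))⁻¹,
          hN.conj_mem ↑g g.2 (s (q₁ * q₂))⟩ v) = ρ₃ g (T₁₂ v)) :
    ∃ c : ℂ, ‖c‖ = 1 ∧
      ∀ v : V₁, T₂ (T₁ (ρ₁ ⟨s q₁ * s q₂ * (s (q₁ * q₂))⁻¹, hτ⟩ v)) = c • T₁₂ v := by
  classical
  set τg : ↥G := ⟨s q₁ * s q₂ * (s (q₁ * q₂))⁻¹, hτ⟩ with hτg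
  -- the composite endomorphism of V₃
  set S : Module.End ℂ V₃ :=
    T₂.toLinearEquiv.toLinearMap ∘ₗ T₁.toLinearEquiv.toLinearMap ∘ₗ
      (ρ₁ τg) ∘ₗ T₁₂.symm.toLinearEquiv.toLinearMap with hS
  have hSapp : ∀ w : V₃, S w = T₂ (T₁ (ρ₁ τg (T₁₂.symm w))) := fun w => rfl
  -- S commutes with ρ₃
  have hcomm : ∀ (g : ↥G) (w : V₃), S (ρ₃ g w) = ρ₃ g (S w) := by
    intro g w
    have h12 : T₁₂.symm (ρ₃ g w) =
        ρ₁ ⟨s (q₁ * q₂) * ↑g * (s (q₁ * q₂))⁻¹, hN.conj_mem ↑g g.2 (s (q₁ * q₂))⟩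
          (T₁₂.symm w) := by
      apply T₁₂.injective
      rw [T₁₂.apply_symm_apply, hT₁₂, T₁₂.apply_symm_apply]
    set g₂ : ↥G := ⟨s q₂ * ↑g * (s q₂)⁻¹, hN.conj_mem ↑g g.2 (s q₂)⟩ with hg₂
    have key : τg * ⟨s (q₁ * q₂) * ↑g * (s (q₁ * q₂))⁻¹, hN.conj_mem ↑g g.2 (s (q₁ * q₂))⟩
        = (⟨s q₁ * ↑g₂ * (s q₁)⁻¹, hN.conj_mem ↑g₂ g₂.2 (s q₁)⟩ : ↥G) * τg := by
      apply Subtype.ext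
      push_cast [hτg, hg₂]
      group
    calc S (ρ₃ g w)
        = T₂ (T₁ (ρ₁ τg (T₁₂.symm (ρ₃ g w)))) := rfl
      _ = T₂ (T₁ ((ρ₁ τg * ρ₁ ⟨s (q₁ * q₂) * ↑g * (s (q₁ * q₂))⁻¹,
            hN.conj_mem ↑g g.2 (s (q₁ * q₂))⟩) (T₁₂.symm w))) := by
          rw [h12]; rfl
      _ = T₂ (T₁ (ρ₁ ⟨s q₁ * ↑g₂ * (s q₁)⁻¹, hN.conj_mem ↑g₂ g₂.2 (s q₁)⟩
            (ρ₁ τg (T₁₂.symm w)))) := by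
          rw [← map_mul, key, map_mul]; rfl
      _ = T₂ (ρ₂ g₂ (T₁ (ρ₁ τg (T₁₂.symm w)))) := by rw [hT₁]
      _ = ρ₃ g (T₂ (T₁ (ρ₁ τg (T₁₂.symm w)))) := by rw [hT₂]
      _ = ρ₃ g (S w) := rfl
  -- S has an eigenvalue
  obtain ⟨c, hc⟩ := Module.End.exists_eigenvalue S
  -- eigenspace is invariant, hence everything
  have heig : ∀ w : V₃, S w = c • w := by
    have := hirr₃ (Module.End.eigenspace S c) ?_
    · rcases this with h | h
      · exact absurd h hc
      · intro w
        have hw : w ∈ Module.End.eigenspace S c := h ▸ Submodule.mem_top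
        exact Module.End.mem_eigenspace_iff.mp hw
    · intro g v hv
      rw [Module.End.mem_eigenspace_iff] at hv ⊢
      rw [hcomm, hv, map_smul]
  -- norm of c is 1
  have hnorm : ‖c‖ = 1 := by
    obtain ⟨w, hw⟩ := exists_ne (0 : V₃)
    have h1 : ‖S w‖ = ‖w‖ := by
      rw [hSapp, T₂.norm_map, T₁.norm_map, hu₁, T₁₂.symm.norm_map]
    rw [heig, norm_smul] at h1
    have hw' : ‖w‖ ≠ 0 := norm_ne_zero_iff.mpr hw
    field_simp at h1
    exact h1
  refine ⟨c, hnorm, fun v => ?_⟩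
  have := heig (T₁₂ v)
  rw [hSapp, T₁₂.symm_apply_apply] at this
  exact this
end
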